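/- arXiv:2504.04856 — 2 statements merged into one kernel-verified Lean document; each statement's English description precedes it below -/
import Mathlib

section
/- Let A be a nonempty finite type of cardinality d, let p : A → ℝ be a probability distribution (p i ≥ 0, Σ_i p i = 1), let ρ be the diagonal matrix with diagonal entries p i, and let σ be any state on A. Let D(σ) be the diagonal matrix whose entry at i is σ i i (the pinching of σ in the diagonal basis of ρ). Then, for the cost matrix K̃₀ = 1 − (1/d) • S: 𝒦_{K̃₀}(ρ, σ) ≥ 𝒦_{K̃₀}(ρ, D(σ)). -/
open Matrix
open scoped Kronecker ComplexOrder

noncomputable def jordan {n : Type*} [Fintype n] (X Y : Matrix n n ℂ) : Matrix n n ℂ :=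
  (2 : ℂ)⁻¹ • (X * Y + Y * X)

noncomputable def trB {A B : Type*} [Fintype B] (M : Matrix (A × B) (A × B) ℂ) : Matrix A A ℂ :=
  Matrix.of fun i j => ∑ k, M (i, k) (j, k)

noncomputable def trA {A B : Type*} [Fintype A] (M : Matrix (A × B) (A × B) ℂ) : Matrix B B ℂ :=
  Matrix.of fun k l => ∑ i, M (i, k) (i, l)

def ptA {A B : Type*} (M : Matrix (A × B) (A × B) ℂ) : Matrix (A × B) (A × B) ℂ :=
  Matrix.of fun p q => M (q.1, p.2) (p.1, q.2)

def swap (A : Type*) [DecidableEq A] : Matrix (A × A) (A × A) ℂ :=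
  Matrix.of fun p q => if p.1 = q.2 ∧ p.2 = q.1 then 1 else 0

def IsState {A : Type*} [Fintype A] (ρ : Matrix A A ℂ) : Prop :=
  ρ.PosSemidef ∧ ρ.trace = 1

def IsJam {A B : Type*} [Fintype A] [Fintype B] [DecidableEq A]
    (J : Matrix (A × B) (A × B) ℂ) : Prop :=
  (ptA J).PosSemidef ∧ trB J = 1

noncomputable def cost {A B : Type*} [Fintype A] [Fintype B] [DecidableEq A] [DecidableEq B]
    (K : Matrix (A × B) (A × B) ℂ) (ρ : Matrix A A ℂ) (σ : Matrix B B ℂ) : ℝ :=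
  sInf { r : ℝ | ∃ J : Matrix (A × B) (A × B) ℂ, IsJam J ∧
      trA ((ρ ⊗ₖ (1 : Matrix B B ℂ)) * J) = σ ∧
      r = (Matrix.trace (K * jordan (ρ ⊗ₖ (1 : Matrix B B ℂ)) J)).re }

noncomputable def eps {A : Type*} (s : A → Bool) (i : A) : ℂ := if s i then 1 else -1

lemma eps_sq {A : Type*} (s : A → Bool) (i : A) : eps s i * eps s i = 1 := by
  unfold eps; split <;> ring

lemma star_eps {A : Type*} (s : A → Bool) (i : A) : star (eps s i) = eps s i := by
  unfold eps; split <;> simp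

lemma sum_eps {A : Type*} [Fintype A] [DecidableEq A] (i j : A) :
    ∑ s : A → Bool, eps s i * eps s j
      = if i = j then ((2 : ℂ) ^ Fintype.card A) else 0 := by
  split_ifs with h
  · subst h
    simp only [eps_sq]
    simp [Finset.card_univ, Fintype.card_fun]
  · refine Finset.sum_ninvolution (fun s => Function.update s i (!(s i))) ?_ ?_ ?_ ?_
    · intro s
      have h1 : eps (Function.update s i (!(s i))) i = - eps s i := by
        unfold eps; cases hs : s i <;> simp [hs]
      have h2 : eps (Function.update s i (!(s i))) j = eps s j := by
        unfold eps; rw [Function.update_of_ne (Ne.symm h)]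
      rw [h1, h2]; ring
    · intro s _ hcon
      have := congrFun hcon i
      simp at this
    · intro s; exact Finset.mem_univ _
    · intro s
      funext a
      by_cases ha : a = i
      · subst ha; simp
      · simp [Function.update_of_ne ha]

section Avg
variable {A : Type*} [Fintype A] [DecidableEq A]

noncomputable def wv (s : A → Bool) : A × A → ℂ := fun q => eps s q.1 * eps s q.2

lemma wv_sq (s : A → Bool) (q : A × A) : wv s q * wv s q = 1 := by
  unfold wv
  calc eps s q.1 * eps s q.2 * (eps s q.1 * eps s q.2)
      = (eps s q.1 * eps s q.1) * (eps s q.2 * eps s q.2) := by ring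
  _ = 1 := by rw [eps_sq, eps_sq, one_mul]

lemma star_wv (s : A → Bool) (q : A × A) : star (wv s q) = wv s q := by
  unfold wv; rw [star_mul', star_eps, star_eps]

noncomputable def Jbar (J : Matrix (A × A) (A × A) ℂ) : Matrix (A × A) (A × A) ℂ :=
  ((2 : ℂ) ^ Fintype.card A)⁻¹ •
    ∑ s : A → Bool, diagonal (wv s) * J * diagonal (wv s)

lemma two_pow_ne : ((2 : ℂ) ^ Fintype.card A) ≠ 0 := by positivity

lemma Jbar_apply (J : Matrix (A × A) (A × A) ℂ) (a b : A × A) :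
    Jbar J a b = ((2 : ℂ) ^ Fintype.card A)⁻¹ *
      ∑ s : A → Bool, wv s a * J a b * wv s b := by
  simp [Jbar, Matrix.sum_apply, diagonal_mul, mul_diagonal]

lemma psd_smul_real {n : Type*} [Fintype n] {M : Matrix n n ℂ} (hM : M.PosSemidef)
    {c : ℝ} (hc : 0 ≤ c) : ((c : ℂ) • M).PosSemidef := by
  refine Matrix.PosSemidef.of_dotProduct_mulVec_nonneg ?_ ?_
  · have h1 := hM.1
    unfold Matrix.IsHermitian at h1 ⊢
    rw [conjTranspose_smul, h1, Complex.star_def, Complex.conj_ofReal]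
  · intro x
    rw [smul_mulVec, dotProduct_smul, smul_eq_mul]
    have h0 := hM.dotProduct_mulVec_nonneg x
    rw [Complex.nonneg_iff] at h0 ⊢
    constructor
    · rw [Complex.re_ofReal_mul]
      exact mul_nonneg hc h0.1
    · simp [Complex.im_ofReal_mul, ← h0.2]

set_option maxHeartbeats 1000000 in
lemma ptA_Jbar_posSemidef (J : Matrix (A × A) (A × A) ℂ) (hJ : (ptA J).PosSemidef) :
    (ptA (Jbar J)).PosSemidef := by
  have heq : ptA (Jbar J) = ((2 : ℂ) ^ Fintype.card A)⁻¹ •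
      ∑ s : A → Bool, diagonal (wv s) * ptA J * diagonal (wv s) := by
    ext p q
    simp only [ptA, Matrix.of_apply, Matrix.smul_apply, Matrix.sum_apply, Jbar,
      diagonal_mul, mul_diagonal, smul_eq_mul]
    congr 1
    refine Finset.sum_congr rfl fun s _ => ?_
    unfold wv; ring
  rw [heq]
  have hsum : (∑ s : A → Bool, diagonal (wv s) * ptA J * diagonal (wv s)).PosSemidef := by
    refine Finset.sum_induction _ Matrix.PosSemidef
      (fun a b ha hb => ha.add hb) Matrix.PosSemidef.zero fun s _ => ?_
    have hH : (diagonal (wv s))ᴴ = diagonal (wv s) := by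
      rw [diagonal_conjTranspose, show star (wv s) = wv s from funext (star_wv s)]
    have h := hJ.mul_mul_conjTranspose_same (diagonal (wv s))
    rwa [hH] at h
  have hcast : ((2 : ℂ) ^ Fintype.card A)⁻¹ = ((((2 : ℝ) ^ Fintype.card A)⁻¹ : ℝ) : ℂ) := by
    push_cast; ring
  rw [hcast]
  exact psd_smul_real hsum (by positivity)
end Avg


lemma psd_diag {m : Type*} [Fintype m] [DecidableEq m] {N : Matrix m m ℂ}
    (hN : N.PosSemidef) (x : m) : 0 ≤ (N x x).re ∧ (N x x).im = 0 := by
  have h := hN.dotProduct_mulVec_nonneg ((Pi.single x 1 : m → ℂ))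
  have he : star (Pi.single x 1 : m → ℂ) ⬝ᵥ N *ᵥ (Pi.single x 1 : m → ℂ) = N x x := by
    have hstar : star (Pi.single x 1 : m → ℂ) = (Pi.single x 1 : m → ℂ) := by
      rw [← Pi.single_star, star_one]
    rw [hstar, Matrix.mulVec_single, single_dotProduct]
    simp
  rw [he, Complex.nonneg_iff] at h
  exact ⟨h.1, h.2.symm⟩

lemma psd_trace_re_nonneg {m : Type*} [Fintype m] [DecidableEq m] {N : Matrix m m ℂ}
    (hN : N.PosSemidef) : 0 ≤ N.trace.re := by
  rw [Matrix.trace, Complex.re_sum]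
  exact Finset.sum_nonneg fun z _ => (psd_diag hN z).1

lemma psd_diag_le_trace {m : Type*} [Fintype m] [DecidableEq m] {N : Matrix m m ℂ}
    (hN : N.PosSemidef) (x : m) : (N x x).re ≤ N.trace.re := by
  rw [Matrix.trace, Complex.re_sum]
  exact Finset.single_le_sum (fun z (_ : z ∈ Finset.univ) => (psd_diag hN z).1)
    (Finset.mem_univ x)

lemma psd_abs_entry_le_trace {m : Type*} [Fintype m] [DecidableEq m] {N : Matrix m m ℂ}
    (hN : N.PosSemidef) (x y : m) : ‖N x y‖ ≤ N.trace.re := by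
  by_cases hxy : x = y
  · subst hxy
    have hd := psd_diag hN x
    have habs : ‖N x x‖ = (N x x).re := by
      have hre : N x x = ((N x x).re : ℂ) := by
        apply Complex.ext <;> simp [hd.2]
      rw [hre, Complex.norm_of_nonneg hd.1, Complex.ofReal_re]
    rw [habs]; exact psd_diag_le_trace hN x
  · by_cases hz0 : N x y = 0
    · rw [hz0]; simpa using psd_trace_re_nonneg hN
    · set z : ℂ := N x y with hzdef
      have hza : ((‖z‖ : ℝ) : ℂ) ≠ 0 := by simpa using hz0
      set c : ℂ := -(star z) / ((‖z‖ : ℝ) : ℂ) with hc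
      have hcz : c * z = -((‖z‖ : ℝ) : ℂ) := by
        rw [hc, div_mul_eq_mul_div, neg_mul, mul_comm (star z) z]
        rw [Complex.star_def, Complex.mul_conj, Complex.normSq_eq_norm_sq]
        push_cast
        field_simp
      have hcc : star c * c = 1 := by
        rw [hc, star_div₀, star_neg, star_star]
        rw [show star (((‖z‖ : ℝ)) : ℂ) = ((‖z‖ : ℝ) : ℂ) from Complex.conj_ofReal _]
        rw [div_mul_div_comm, neg_mul_neg, Complex.star_def,
          Complex.mul_conj, Complex.normSq_eq_norm_sq]
        push_cast
        rw [pow_two]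
        exact div_self (mul_ne_zero hza hza)
      have hstar : star ((Pi.single x 1 : m → ℂ) + (Pi.single y c : m → ℂ))
          = (Pi.single x 1 : m → ℂ) + (Pi.single y (star c) : m → ℂ) := by
        rw [star_add, ← Pi.single_star, ← Pi.single_star, star_one]
      have h := hN.dotProduct_mulVec_nonneg ((Pi.single x 1 : m → ℂ) + (Pi.single y c : m → ℂ))
      rw [hstar] at h
      simp only [dotProduct_add, add_dotProduct, mulVec_add, Matrix.mulVec_single,
        single_dotProduct, Pi.smul_apply, Matrix.col_apply, op_smul_eq_mul, mul_one, one_mul] at h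
      have hyx : N y x = star z := by rw [hzdef]; exact (hN.1.apply y x).symm
      have h1 : star c * N y x = -((‖z‖ : ℝ) : ℂ) := by
        rw [hyx, ← star_mul', hcz, star_neg, Complex.star_def, Complex.conj_ofReal]
      have h2 : N x y * c = -((‖z‖ : ℝ) : ℂ) := by
        rw [← hzdef, mul_comm]; exact hcz
      have h3 : star c * (N y y * c) = N y y := by
        calc star c * (N y y * c) = (star c * c) * N y y := by ring
        _ = N y y := by rw [hcc, one_mul]
      rw [h1, h2, h3, Complex.nonneg_iff] at h
      have hre := h.1
      simp only [Complex.add_re, Complex.neg_re, Complex.ofReal_re] at hre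
      have e1 := psd_diag_le_trace hN x
      have e2 := psd_diag_le_trace hN y
      show ‖z‖ ≤ N.trace.re
      linarith

section Avg2
variable {A : Type*} [Fintype A] [DecidableEq A]

lemma trB_Jbar (J : Matrix (A × A) (A × A) ℂ) (hJ : trB J = 1) : trB (Jbar J) = 1 := by
  ext i j
  show (∑ k, Jbar J (i, k) (j, k)) = (1 : Matrix A A ℂ) i j
  simp only [Jbar_apply]
  rw [← Finset.mul_sum, Finset.sum_comm]
  have hin : ∀ s : A → Bool, (∑ k, wv s (i, k) * J (i, k) (j, k) * wv s (j, k))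
      = eps s i * eps s j * ((1 : Matrix A A ℂ) i j) := by
    intro s
    have hterm : ∀ k, wv s (i, k) * J (i, k) (j, k) * wv s (j, k)
        = eps s i * eps s j * J (i, k) (j, k) := by
      intro k
      unfold wv
      calc eps s i * eps s k * J (i, k) (j, k) * (eps s j * eps s k)
          = (eps s k * eps s k) * (eps s i * eps s j * J (i, k) (j, k)) := by ring
      _ = eps s i * eps s j * J (i, k) (j, k) := by rw [eps_sq, one_mul]
    rw [Finset.sum_congr rfl fun k _ => hterm k, ← Finset.mul_sum]
    congr 1
    have := congrFun (congrFun hJ i) j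
    simpa [trB] using this
  rw [Finset.sum_congr rfl fun s _ => hin s, ← Finset.sum_mul, sum_eps]
  by_cases hij : i = j
  · subst hij
    rw [if_pos rfl, Matrix.one_apply_eq, mul_one, inv_mul_cancel₀ two_pow_ne]
  · rw [if_neg hij, Matrix.one_apply_ne hij, mul_zero, mul_zero]

lemma trA_Jbar (p : A → ℝ) (J : Matrix (A × A) (A × A) ℂ) (σ : Matrix A A ℂ)
    (hm : trA (diagonal (fun q : A × A => (p q.1 : ℂ)) * J) = σ) :
    trA (diagonal (fun q : A × A => (p q.1 : ℂ)) * Jbar J)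
      = diagonal (fun i => σ i i) := by
  ext k l
  show (∑ i, (diagonal (fun q : A × A => (p q.1 : ℂ)) * Jbar J) (i, k) (i, l)) = _
  have h1 : ∀ i : A, (diagonal (fun q : A × A => (p q.1 : ℂ)) * Jbar J) (i, k) (i, l)
      = ((2 : ℂ) ^ Fintype.card A)⁻¹ *
        ∑ s : A → Bool, (p i : ℂ) * (wv s (i, k) * J (i, k) (i, l) * wv s (i, l)) := by
    intro i
    rw [diagonal_mul, Jbar_apply, ← mul_assoc, mul_comm ((p i : ℂ)) _, mul_assoc,
      Finset.mul_sum]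
  rw [Finset.sum_congr rfl fun i _ => h1 i, ← Finset.mul_sum, Finset.sum_comm]
  have hσ : ∀ k' l' : A, (∑ i, (p i : ℂ) * J (i, k') (i, l')) = σ k' l' := by
    intro k' l'
    have := congrFun (congrFun hm k') l'
    simpa [trA, diagonal_mul] using this
  have hin : ∀ s : A → Bool,
      (∑ i, (p i : ℂ) * (wv s (i, k) * J (i, k) (i, l) * wv s (i, l)))
        = eps s k * eps s l * σ k l := by
    intro s
    have hterm : ∀ i, (p i : ℂ) * (wv s (i, k) * J (i, k) (i, l) * wv s (i, l))
        = eps s k * eps s l * ((p i : ℂ) * J (i, k) (i, l)) := by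
      intro i
      unfold wv
      calc (p i : ℂ) * (eps s i * eps s k * J (i, k) (i, l) * (eps s i * eps s l))
          = (eps s i * eps s i) * (eps s k * eps s l * ((p i : ℂ) * J (i, k) (i, l))) := by
            ring
      _ = _ := by rw [eps_sq, one_mul]
    rw [Finset.sum_congr rfl fun i _ => hterm i, ← Finset.mul_sum, hσ]
  rw [Finset.sum_congr rfl fun s _ => hin s, ← Finset.sum_mul, sum_eps]
  by_cases hkl : k = l
  · subst hkl
    rw [if_pos rfl, Matrix.diagonal_apply_eq, ← mul_assoc, inv_mul_cancel₀ two_pow_ne,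
      one_mul]
  · rw [if_neg hkl, Matrix.diagonal_apply_ne _ hkl, zero_mul, mul_zero]

lemma trace_K_jordan {n : Type*} [Fintype n] [DecidableEq n] (K M : Matrix n n ℂ)
    (v : n → ℂ) :
    Matrix.trace (K * jordan (diagonal v) M)
      = ∑ a, ∑ b, (2 : ℂ)⁻¹ * (v a + v b) * (K a b * M b a) := by
  rw [Matrix.trace]
  simp only [Matrix.diag_apply, Matrix.mul_apply]
  refine Finset.sum_congr rfl fun a _ => Finset.sum_congr rfl fun b _ => ?_
  simp only [jordan, Matrix.smul_apply, Matrix.add_apply, diagonal_mul, mul_diagonal,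
    smul_eq_mul]
  ring

lemma trace_Jbar (c : ℂ) (v : (A × A) → ℂ) (J : Matrix (A × A) (A × A) ℂ) :
    Matrix.trace (((1 : Matrix (A × A) (A × A) ℂ) - c • swap A) * jordan (diagonal v) (Jbar J))
      = Matrix.trace (((1 : Matrix (A × A) (A × A) ℂ) - c • swap A) * jordan (diagonal v) J) := by
  rw [trace_K_jordan, trace_K_jordan]
  set K := (1 : Matrix (A × A) (A × A) ℂ) - c • swap A with hKdef
  have hK : ∀ (s : A → Bool) (a b : A × A), K a b * (wv s a * wv s b) = K a b := by
    intro s a b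
    by_cases hab : a = b
    · subst hab; rw [wv_sq, mul_one]
    · by_cases hsw : a.1 = b.2 ∧ a.2 = b.1
      · have h1 : wv s a * wv s b = 1 := by
          unfold wv
          rw [hsw.1, hsw.2]
          calc eps s b.2 * eps s b.1 * (eps s b.1 * eps s b.2)
              = (eps s b.1 * eps s b.1) * (eps s b.2 * eps s b.2) := by ring
          _ = 1 := by rw [eps_sq, eps_sq, one_mul]
        rw [h1, mul_one]
      · have h0 : K a b = 0 := by
          simp [hKdef, Matrix.sub_apply, Matrix.one_apply, Matrix.smul_apply, _root_.swap, hab, hsw]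
        rw [h0, zero_mul]
  have hKJ : ∀ a b : A × A, K a b * Jbar J b a = K a b * J b a := by
    intro a b
    rw [Jbar_apply, mul_left_comm, Finset.mul_sum]
    have hterm : ∀ s : A → Bool, K a b * (wv s b * J b a * wv s a) = K a b * J b a := by
      intro s
      calc K a b * (wv s b * J b a * wv s a)
          = (K a b * (wv s a * wv s b)) * J b a := by ring
      _ = K a b * J b a := by rw [hK s a b]
    rw [Finset.sum_congr rfl fun s _ => hterm s, Finset.sum_const, Finset.card_univ,
      Fintype.card_fun, Fintype.card_bool, nsmul_eq_mul]
    push_cast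
    rw [← mul_assoc, inv_mul_cancel₀ two_pow_ne, one_mul]
  refine Finset.sum_congr rfl fun a _ => Finset.sum_congr rfl fun b _ => ?_
  rw [hKJ a b]
end Avg2

section Feas
variable {A : Type*} [Fintype A] [DecidableEq A]

lemma trace_ptA_eq (J : Matrix (A × A) (A × A) ℂ) (hJ : trB J = 1) :
    (ptA J).trace = (Fintype.card A : ℂ) := by
  rw [Matrix.trace]
  have h1 : ∀ p : A × A, (ptA J).diag p = J p p := by
    intro p; simp [ptA, Matrix.diag_apply]
  rw [Finset.sum_congr rfl fun p _ => h1 p, Fintype.sum_prod_type]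
  have h2 : ∀ i : A, (∑ k, J (i, k) (i, k)) = 1 := by
    intro i
    have := congrFun (congrFun hJ i) i
    simpa [trB, Matrix.one_apply] using this
  rw [Finset.sum_congr rfl fun i _ => h2 i, Finset.sum_const, Finset.card_univ,
    nsmul_eq_mul, mul_one]

lemma entry_bound (J : Matrix (A × A) (A × A) ℂ) (hPSD : (ptA J).PosSemidef)
    (hJ : trB J = 1) (a b : A × A) : ‖J b a‖ ≤ (Fintype.card A : ℝ) := by
  have h1 : J b a = ptA J (a.1, b.2) (b.1, a.2) := by simp [ptA]
  rw [h1]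
  have h2 := psd_abs_entry_le_trace hPSD (a.1, b.2) (b.1, a.2)
  rwa [trace_ptA_eq J hJ, Complex.natCast_re] at h2

lemma cost_bound (K : Matrix (A × A) (A × A) ℂ) (v : A × A → ℂ)
    (J : Matrix (A × A) (A × A) ℂ) (hPSD : (ptA J).PosSemidef) (htrB : trB J = 1) :
    -((∑ a, ∑ b, ‖(2 : ℂ)⁻¹ * (v a + v b) * K a b‖) * (Fintype.card A : ℝ))
      ≤ (Matrix.trace (K * jordan (diagonal v) J)).re := by
  rw [trace_K_jordan]
  set zz : ℂ := ∑ a, ∑ b, (2 : ℂ)⁻¹ * (v a + v b) * (K a b * J b a) with hzz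
  have h2 : ‖zz‖
      ≤ (∑ a, ∑ b, ‖(2 : ℂ)⁻¹ * (v a + v b) * K a b‖) * (Fintype.card A : ℝ) := by
    rw [hzz]
    refine le_trans (norm_sum_le _ _) ?_
    rw [Finset.sum_mul]
    refine Finset.sum_le_sum fun a _ => ?_
    refine le_trans (norm_sum_le _ _) ?_
    rw [Finset.sum_mul]
    refine Finset.sum_le_sum fun b _ => ?_
    rw [show (2 : ℂ)⁻¹ * (v a + v b) * (K a b * J b a)
        = ((2 : ℂ)⁻¹ * (v a + v b) * K a b) * J b a from by ring, norm_mul]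
    exact mul_le_mul_of_nonneg_left (entry_bound J hPSD htrB a b) (norm_nonneg _)
  have h3 : -(‖zz‖) ≤ zz.re := by
    have := Complex.abs_re_le_norm zz
    have h4 := abs_le.mp this
    linarith [h4.1]
  linarith

lemma ptA_one_kron (σ : Matrix A A ℂ) :
    ptA ((1 : Matrix A A ℂ) ⊗ₖ σ) = (1 : Matrix A A ℂ) ⊗ₖ σ := by
  ext p q
  by_cases h : p.1 = q.1
  · simp [ptA, Matrix.kroneckerMap_apply, Matrix.one_apply, h]
  · simp [ptA, Matrix.kroneckerMap_apply, Matrix.one_apply, h, Ne.symm h]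

lemma one_kron_posSemidef (σ : Matrix A A ℂ) (hσ : σ.PosSemidef) :
    ((1 : Matrix A A ℂ) ⊗ₖ σ).PosSemidef := by
  refine Matrix.PosSemidef.of_dotProduct_mulVec_nonneg ?_ ?_
  · apply Matrix.ext; intro p q
    rw [Matrix.conjTranspose_apply]
    by_cases h : p.1 = q.1
    · rw [Matrix.kroneckerMap_apply, Matrix.kroneckerMap_apply, Matrix.one_apply,
        Matrix.one_apply, if_pos h, if_pos h.symm, one_mul, one_mul]
      exact hσ.1.apply p.2 q.2
    · simp [Matrix.kroneckerMap_apply, Matrix.one_apply, h, Ne.symm h]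
  · intro x
    have he : star x ⬝ᵥ ((1 : Matrix A A ℂ) ⊗ₖ σ) *ᵥ x
        = ∑ i, star (fun k => x (i, k)) ⬝ᵥ σ *ᵥ (fun k => x (i, k)) := by
      simp only [dotProduct, mulVec, Matrix.kroneckerMap_apply, Matrix.one_apply,
        Pi.star_apply, Fintype.sum_prod_type]
      refine Finset.sum_congr rfl fun i _ => Finset.sum_congr rfl fun k _ => ?_
      congr 1
      rw [Finset.sum_eq_single i]
      · simp
      · intro j _ hj
        simp [Ne.symm hj]
      · simp
    rw [he]
    exact Finset.sum_nonneg fun i _ => hσ.dotProduct_mulVec_nonneg _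

lemma trB_one_kron (σ : Matrix A A ℂ) (hσ : σ.trace = 1) :
    trB ((1 : Matrix A A ℂ) ⊗ₖ σ) = 1 := by
  ext i j
  show (∑ k, ((1 : Matrix A A ℂ) ⊗ₖ σ) (i, k) (j, k)) = (1 : Matrix A A ℂ) i j
  by_cases h : i = j
  · subst h
    simp only [Matrix.kroneckerMap_apply, Matrix.one_apply_eq, one_mul]
    simpa [Matrix.trace] using hσ
  · simp [Matrix.kroneckerMap_apply, Matrix.one_apply, h]

lemma trA_one_kron (p : A → ℝ) (hp1 : ∑ i, p i = 1) (σ : Matrix A A ℂ) :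
    trA (diagonal (fun q : A × A => (p q.1 : ℂ)) * ((1 : Matrix A A ℂ) ⊗ₖ σ)) = σ := by
  ext k l
  show (∑ i, (diagonal (fun q : A × A => (p q.1 : ℂ)) * ((1 : Matrix A A ℂ) ⊗ₖ σ))
    (i, k) (i, l)) = σ k l
  have h1 : ∀ i : A, (diagonal (fun q : A × A => (p q.1 : ℂ)) * ((1 : Matrix A A ℂ) ⊗ₖ σ))
      (i, k) (i, l) = (p i : ℂ) * σ k l := by
    intro i
    rw [diagonal_mul]
    simp [Matrix.kroneckerMap_apply, Matrix.one_apply]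
  rw [Finset.sum_congr rfl fun i _ => h1 i, ← Finset.sum_mul]
  have h2 : (∑ i, (p i : ℂ)) = 1 := by
    rw [← Complex.ofReal_sum, hp1, Complex.ofReal_one]
  rw [h2, one_mul]
end Feas


theorem stmt18 {A : Type*} [Fintype A] [Nonempty A] [DecidableEq A]
    (p : A → ℝ) (hp : ∀ i, 0 ≤ p i) (hp1 : ∑ i, p i = 1)
    (σ : Matrix A A ℂ) (hσ : IsState σ) :
    cost (1 - ((1 : ℂ) / (Fintype.card A : ℂ)) • swap A)
        (Matrix.diagonal fun i => (p i : ℂ)) (Matrix.diagonal fun i => σ i i) ≤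
      cost (1 - ((1 : ℂ) / (Fintype.card A : ℂ)) • swap A)
        (Matrix.diagonal fun i => (p i : ℂ)) σ := by
  classical
  have hρ : (Matrix.diagonal fun i => (p i : ℂ)) ⊗ₖ (1 : Matrix A A ℂ)
      = diagonal (fun q : A × A => (p q.1 : ℂ)) := by
    rw [← Matrix.diagonal_one, Matrix.diagonal_kronecker_diagonal]
    simp
  unfold cost
  rw [hρ]
  set v : A × A → ℂ := fun q : A × A => (p q.1 : ℂ) with hv
  set K : Matrix (A × A) (A × A) ℂ :=
    (1 : Matrix (A × A) (A × A) ℂ) - ((1 : ℂ) / (Fintype.card A : ℂ)) • swap A with hKdef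
  apply csInf_le_csInf
  · refine ⟨-((∑ a : A × A, ∑ b : A × A,
        ‖(2 : ℂ)⁻¹ * (v a + v b) * K a b‖) * (Fintype.card A : ℝ)),
      fun r hr => ?_⟩
    obtain ⟨J, hJam, hmarg, hrr⟩ := hr
    rw [hrr]
    exact cost_bound K v J hJam.1 hJam.2
  · refine ⟨_, (1 : Matrix A A ℂ) ⊗ₖ σ, ⟨?_, ?_⟩, ?_, rfl⟩
    · rw [ptA_one_kron]; exact one_kron_posSemidef σ hσ.1
    · exact trB_one_kron σ hσ.2
    · exact trA_one_kron p hp1 σ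
  · rintro r ⟨J, hJam, hmarg, hrr⟩
    refine ⟨Jbar J, ⟨ptA_Jbar_posSemidef J hJam.1, trB_Jbar J hJam.2⟩, ?_, ?_⟩
    · exact trA_Jbar p J σ hmarg
    · rw [hrr, hKdef, trace_Jbar]
end

section
/- Let A be a nonempty finite type of cardinality d, let p, q : A → ℝ be probability distributions (nonnegative, summing to 1), and let ρ and σ be the diagonal complex matrices with diagonal entries p i and q i respectively (so ρ and σ commute). For each i set r i = 1 if p i = 0 and r i = min(1, q i / p i) otherwise. Then, for the cost matrix K̃₀ = 1 − (1/d) • S: 𝒦_{K̃₀}(ρ, σ) = (1/d) · ( d − Σ_{i,j} p i · √(r i) · √(r j) ). -/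
open Matrix
open scoped Kronecker ComplexOrder

/-! ### Auxiliary lemmas -/

section Aux

set_option linter.unusedSectionVars false
set_option linter.unusedVariables false

/-- entries of a PSD matrix have nonnegative real diagonal -/
lemma psd_diag_re_nonneg {n : Type*} [Fintype n] [DecidableEq n] {M : Matrix n n ℂ}
    (hM : M.PosSemidef) (x : n) : 0 ≤ (M x x).re := by
  have := hM.re_dotProduct_nonneg (Pi.single x 1)
  simpa [dotProduct, mulVec, Pi.single_apply] using this

lemma psd_entry_sq_le {n : Type*} [Fintype n] [DecidableEq n] {M : Matrix n n ℂ}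
    (hM : M.PosSemidef) (x y : n) :
    (M x y).re ^ 2 ≤ (M x x).re * (M y y).re := by
  rcases eq_or_ne x y with rfl | hxy
  · nlinarith [psd_diag_re_nonneg hM x]
  · have hyx : M y x = starRingEnd ℂ (M x y) := by
      have h := hM.isHermitian
      rw [Matrix.IsHermitian] at h
      conv_lhs => rw [← h]
      simp [conjTranspose_apply]
    have h : ∀ t : ℝ, 0 ≤ (M x x).re * (t * t) + (2 * (M x y).re) * t + (M y y).re := by
      intro t
      set v : n → ℂ := fun a => if a = x then (t : ℂ) else if a = y then 1 else 0 with hv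
      have inner : ∀ a, (M *ᵥ v) a = M a x * t + M a y := by
        intro a
        simp only [mulVec, dotProduct, hv]
        rw [Finset.sum_congr rfl (fun b _ => show
          M a b * (if b = x then (t:ℂ) else if b = y then 1 else 0)
            = (if b = x then M a x * t else 0) + (if b = y then M a y else 0) from by
          split_ifs with h1 h2 <;> simp_all)]
        simp [Finset.sum_add_distrib]
      have outer : star v ⬝ᵥ (M *ᵥ v) = (t:ℂ) * (M x x * t + M x y) + (M y x * t + M y y) := by
        simp only [dotProduct, Pi.star_apply, hv]
        rw [Finset.sum_congr rfl (fun a _ => show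
          star (if a = x then (t:ℂ) else if a = y then 1 else 0) * (M *ᵥ v) a
            = (if a = x then (t:ℂ) * (M x x * t + M x y) else 0)
              + (if a = y then (M y x * t + M y y) else 0) from by
          split_ifs with h1 h2 <;> simp_all [inner])]
        simp [Finset.sum_add_distrib]
      have h0 := hM.re_dotProduct_nonneg v
      rw [outer] at h0
      simp only [RCLike.re_to_complex, Complex.add_re, Complex.mul_re, Complex.ofReal_re,
        Complex.ofReal_im, hyx, Complex.conj_re, Complex.conj_im, pow_two] at h0
      ring_nf at h0 ⊢
      nlinarith [h0]
    have hd := discrim_le_zero h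
    rw [discrim] at hd
    nlinarith

lemma psd_entry_re_le {n : Type*} [Fintype n] [DecidableEq n] {M : Matrix n n ℂ}
    (hM : M.PosSemidef) (x y : n) :
    (M x y).re ≤ Real.sqrt (M x x).re * Real.sqrt (M y y).re := by
  have h1 := psd_entry_sq_le hM x y
  have h2 := psd_diag_re_nonneg hM x
  have h3 := psd_diag_re_nonneg hM y
  calc (M x y).re ≤ |(M x y).re| := le_abs_self _
    _ = Real.sqrt ((M x y).re ^ 2) := (Real.sqrt_sq_eq_abs _).symm
    _ ≤ Real.sqrt ((M x x).re * (M y y).re) := Real.sqrt_le_sqrt h1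
    _ = _ := Real.sqrt_mul h2 _

lemma point_max (x : ℝ) : max 0 x - max 0 (-x) = x := by
  rcases le_total 0 x with h | h
  · rw [max_eq_right h, max_eq_left (by linarith)]; ring
  · rw [max_eq_left h, max_eq_right (by linarith)]; ring

variable {A : Type*} [Fintype A] [DecidableEq A]
variable (p q r : A → ℝ)

lemma scal_r0 (hp : ∀ i, 0 ≤ p i) (hq : ∀ i, 0 ≤ q i)
    (hr : ∀ i, r i = if p i = 0 then 1 else min 1 (q i / p i)) : ∀ i, 0 ≤ r i := by
  intro i; rw [hr i]; split_ifs with h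
  · norm_num
  · exact le_min zero_le_one (div_nonneg (hq i) (hp i))

lemma scal_r1 (hr : ∀ i, r i = if p i = 0 then 1 else min 1 (q i / p i)) : ∀ i, r i ≤ 1 := by
  intro i; rw [hr i]; split_ifs with h
  · exact le_refl 1
  · exact min_le_left _ _

lemma scal_pr (hp : ∀ i, 0 ≤ p i) (hq : ∀ i, 0 ≤ q i)
    (hr : ∀ i, r i = if p i = 0 then 1 else min 1 (q i / p i)) :
    ∀ i, p i * r i = min (p i) (q i) := by
  intro i; rw [hr i]; split_ifs with h
  · rw [h]; simp [min_eq_left (hq i)]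
  · have hpi : 0 < p i := lt_of_le_of_ne (hp i) (Ne.symm h)
    rw [mul_min_of_nonneg _ _ (hp i), mul_one, mul_div_cancel₀ _ (ne_of_gt hpi)]

lemma scal_ps (hp : ∀ i, 0 ≤ p i) (hq : ∀ i, 0 ≤ q i)
    (hr : ∀ i, r i = if p i = 0 then 1 else min 1 (q i / p i)) :
    ∀ i, p i * (1 - r i) = max 0 (p i - q i) := by
  intro i
  have h2 := scal_pr p q r hp hq hr i
  rcases le_total (p i) (q i) with h | h
  · rw [min_eq_left h] at h2
    rw [max_eq_left (by linarith)]
    nlinarith [h2]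
  · rw [min_eq_right h] at h2
    rw [max_eq_right (by linarith)]
    nlinarith [h2]

lemma scal_sc (hp : ∀ i, 0 ≤ p i) (hq : ∀ i, 0 ≤ q i)
    (hr : ∀ i, r i = if p i = 0 then 1 else min 1 (q i / p i)) :
    ∀ i, (1 - r i) * max 0 (q i - p i) = 0 := by
  intro i
  rcases le_total (q i) (p i) with h | h
  · rw [max_eq_left (by linarith), mul_zero]
  · have : r i = 1 := by
      rw [hr i]; split_ifs with h0
      · rfl
      · have hpi : 0 < p i := lt_of_le_of_ne (hp i) (Ne.symm h0)
        rw [min_eq_left ((le_div_iff₀ hpi).mpr (by linarith))]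
    rw [this]; ring

lemma scal_TT (hp1 : ∑ i, p i = 1) (hq1 : ∑ i, q i = 1) :
    ∑ i, max 0 (q i - p i) = ∑ i, max 0 (p i - q i) := by
  have h : ∑ i, (max 0 (q i - p i) - max 0 (p i - q i)) = 0 := by
    rw [Finset.sum_congr rfl fun i _ => by
      rw [show p i - q i = -(q i - p i) by ring, point_max]]
    rw [Finset.sum_sub_distrib, hp1, hq1]; ring
  rw [Finset.sum_sub_distrib] at h
  linarith

/-! ### trace computations -/

lemma trace_trA (M : Matrix (A × A) (A × A) ℂ) : (trA M).trace = M.trace := by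
  simp only [trA, Matrix.trace, Matrix.diag, Matrix.of_apply, Fintype.sum_prod_type]
  exact Finset.sum_comm

lemma trace_swap_mul (N : Matrix (A × A) (A × A) ℂ) :
    (swap A * N).trace = ∑ i, ∑ k, N (k, i) (i, k) := by
  simp only [Matrix.trace, Matrix.diag, Matrix.mul_apply, _root_.swap, Matrix.of_apply,
    Fintype.sum_prod_type, ite_mul, one_mul, zero_mul]
  simp [ite_and, Finset.sum_ite_eq, Finset.sum_ite_eq']

lemma kron_diag_one (p : A → ℝ) :
    (Matrix.diagonal fun i => (p i : ℂ)) ⊗ₖ (1 : Matrix A A ℂ)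
      = Matrix.diagonal (fun x : A × A => (p x.1 : ℂ)) := by
  ext ⟨i, k⟩ ⟨j, l⟩
  simp [Matrix.kroneckerMap_apply, Matrix.diagonal, Matrix.one_apply, Prod.ext_iff]
  split_ifs <;> simp_all

lemma key_formula (hq1 : ∑ i, q i = 1)
    (J : Matrix (A × A) (A × A) ℂ) (hHerm : (ptA J).IsHermitian)
    (hcon : trA ((Matrix.diagonal (fun x : A × A => (p x.1 : ℂ))) * J)
      = Matrix.diagonal (fun i => (q i : ℂ))) :
    (Matrix.trace ((1 - ((1 : ℂ) / (Fintype.card A : ℂ)) • swap A)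
        * jordan (Matrix.diagonal (fun x : A × A => (p x.1 : ℂ))) J)).re
      = 1 - (1 / (Fintype.card A : ℝ)) * ∑ i, ∑ k, p i * (J (k, i) (i, k)).re := by
  set X := Matrix.diagonal (fun x : A × A => (p x.1 : ℂ)) with hXdef
  set c : ℂ := (1 : ℂ) / (Fintype.card A : ℂ) with hcdef
  have e1 : Matrix.trace ((1 - c • swap A) * jordan X J)
      = Matrix.trace (jordan X J) - c * Matrix.trace (swap A * jordan X J) := by
    rw [Matrix.sub_mul, Matrix.one_mul, Matrix.trace_sub, Matrix.smul_mul,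
      Matrix.trace_smul, smul_eq_mul]
  have e2 : Matrix.trace (jordan X J) = Matrix.trace (X * J) := by
    rw [jordan, Matrix.trace_smul, Matrix.trace_add, Matrix.trace_mul_comm J X, smul_eq_mul]
    ring
  have e3 : Matrix.trace (X * J) = 1 := by
    rw [← trace_trA, hcon, Matrix.trace_diagonal]
    rw [show ∑ i, ((q i : ℂ)) = ((∑ i, q i : ℝ) : ℂ) by push_cast; ring, hq1]
    norm_num
  have e4 : Matrix.trace (swap A * jordan X J)
      = 2⁻¹ * ((∑ i, ∑ k, (p k : ℂ) * J (k, i) (i, k))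
          + ∑ i, ∑ k, J (k, i) (i, k) * (p i : ℂ)) := by
    rw [jordan, Matrix.mul_smul, Matrix.trace_smul, Matrix.mul_add, Matrix.trace_add,
      trace_swap_mul, trace_swap_mul, smul_eq_mul]
    congr 1
    congr 1
    · exact Finset.sum_congr rfl fun i _ => Finset.sum_congr rfl fun k _ => by
        rw [hXdef, Matrix.diagonal_mul]
    · exact Finset.sum_congr rfl fun i _ => Finset.sum_congr rfl fun k _ => by
        rw [hXdef, Matrix.mul_diagonal]
  have hsymE : ∀ i k : A, (J (k, i) (i, k)).re = (J (i, k) (k, i)).re := by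
    intro i k
    have h1 : star (J (i, k) (k, i)) = J (k, i) (i, k) := hHerm.apply (i, i) (k, k)
    rw [← h1]
    simp
  have e5 : ((∑ i, ∑ k, (p k : ℂ) * J (k, i) (i, k))
        + ∑ i, ∑ k, J (k, i) (i, k) * (p i : ℂ)).re
      = 2 * ∑ i, ∑ k, p i * (J (k, i) (i, k)).re := by
    rw [Complex.add_re]
    rw [show (∑ i, ∑ k, (p k : ℂ) * J (k, i) (i, k)).re
        = ∑ i, ∑ k, p k * (J (k, i) (i, k)).re by
      simp [Complex.re_sum, Complex.mul_re]]
    rw [show (∑ i, ∑ k, J (k, i) (i, k) * (p i : ℂ)).re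
        = ∑ i, ∑ k, p i * (J (k, i) (i, k)).re by
      simp [Complex.re_sum, Complex.mul_re, mul_comm]]
    rw [show (∑ i, ∑ k, p k * (J (k, i) (i, k)).re)
        = ∑ i, ∑ k, p i * (J (k, i) (i, k)).re by
      rw [Finset.sum_comm]
      exact Finset.sum_congr rfl fun i _ => Finset.sum_congr rfl fun k _ => by
        rw [hsymE]]
    ring
  rw [e1, e2, e3, e4]
  have hc : c = ((1 / (Fintype.card A : ℝ) : ℝ) : ℂ) := by rw [hcdef]; push_cast; ring
  rw [hc]
  set W : ℂ := (∑ i, ∑ k, (p k : ℂ) * J (k, i) (i, k))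
      + ∑ i, ∑ k, J (k, i) (i, k) * (p i : ℂ) with hW
  have : ((1 : ℂ) - ((1 / (Fintype.card A : ℝ) : ℝ) : ℂ) * (2⁻¹ * W)).re
      = 1 - (1 / (Fintype.card A : ℝ)) * (2⁻¹ * W.re) := by
    simp [Complex.sub_re, Complex.mul_re]
  rw [this, e5]
  ring

/-! ### The explicit optimal coupling -/

noncomputable def Dd : A × A → ℝ := fun x =>
  (1 - r x.1) * max 0 (q x.2 - p x.2) / ∑ j, max 0 (q j - p j)

noncomputable def Gmat : Matrix (A × A) (A × A) ℂ :=
  Matrix.vecMulVec (fun x : A × A => if x.1 = x.2 then (Real.sqrt (r x.1) : ℂ) else 0)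
    (star fun x : A × A => if x.1 = x.2 then (Real.sqrt (r x.1) : ℂ) else 0)
  + Matrix.diagonal fun x => (Dd p q r x : ℂ)

lemma Gmat_apply (x y : A × A) : Gmat p q r x y
    = (if x.1 = x.2 then (Real.sqrt (r x.1) : ℂ) else 0)
      * (if y.1 = y.2 then (Real.sqrt (r y.1) : ℂ) else 0)
      + (if x = y then (Dd p q r x : ℂ) else 0) := by
  simp only [Gmat, Matrix.add_apply, Matrix.vecMulVec_apply, Matrix.diagonal_apply,
    Pi.star_apply]
  congr 2
  split_ifs <;> simp

lemma Dd_nonneg (hr1 : ∀ i, r i ≤ 1) : ∀ x, 0 ≤ Dd p q r x := fun x =>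
  div_nonneg (mul_nonneg (by have := hr1 x.1; linarith) (le_max_left _ _))
    (Finset.sum_nonneg fun j _ => le_max_left _ _)

lemma Gmat_psd (hr1 : ∀ i, r i ≤ 1) : (Gmat p q r).PosSemidef := by
  apply Matrix.PosSemidef.add
  · rw [Matrix.vecMulVec_eq Unit, ← Matrix.conjTranspose_replicateCol]
    exact Matrix.posSemidef_self_mul_conjTranspose _
  · refine Matrix.PosSemidef.diagonal fun x => ?_
    simpa using Complex.real_le_real.mpr (Dd_nonneg p q r hr1 x)

lemma T_zero (hp : ∀ i, 0 ≤ p i) (hq : ∀ i, 0 ≤ q i)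
    (hp1 : ∑ i, p i = 1) (hq1 : ∑ i, q i = 1)
    (hr : ∀ i, r i = if p i = 0 then 1 else min 1 (q i / p i))
    (hT : (∑ j, max 0 (q j - p j)) = 0) : ∀ i, r i = 1 := by
  intro i
  have h := scal_TT p q hp1 hq1
  rw [hT] at h
  have hz : ∀ j ∈ Finset.univ, max 0 (p j - q j) = 0 :=
    (Finset.sum_eq_zero_iff_of_nonneg (fun j _ => le_max_left _ _)).mp h.symm
  have hps := scal_ps p q r hp hq hr i
  rw [hz i (Finset.mem_univ i)] at hps
  by_cases hpi : p i = 0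
  · rw [hr i]; simp [hpi]
  · have : 1 - r i = 0 := by
      rcases mul_eq_zero.mp hps with h1 | h1
      · exact absurd h1 hpi
      · exact h1
    linarith

lemma Dd_row (hp : ∀ i, 0 ≤ p i) (hq : ∀ i, 0 ≤ q i)
    (hp1 : ∑ i, p i = 1) (hq1 : ∑ i, q i = 1)
    (hr : ∀ i, r i = if p i = 0 then 1 else min 1 (q i / p i)) :
    ∀ i, ∑ k, Dd p q r (i, k) = 1 - r i := by
  intro i
  by_cases hT : (∑ j, max 0 (q j - p j)) = 0
  · have h1 := T_zero p q r hp hq hp1 hq1 hr hT i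
    simp [Dd, hT, h1]
  · rw [Finset.sum_congr rfl (fun k _ => show Dd p q r (i, k)
      = (1 - r i) * max 0 (q k - p k) / (∑ j, max 0 (q j - p j)) from rfl)]
    rw [← Finset.sum_div, ← Finset.mul_sum, mul_div_assoc, div_self hT, mul_one]

lemma Dd_col (hp : ∀ i, 0 ≤ p i) (hq : ∀ i, 0 ≤ q i)
    (hp1 : ∑ i, p i = 1) (hq1 : ∑ i, q i = 1)
    (hr : ∀ i, r i = if p i = 0 then 1 else min 1 (q i / p i)) :
    ∀ k, ∑ i, p i * Dd p q r (i, k) = max 0 (q k - p k) := by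
  intro k
  by_cases hT : (∑ j, max 0 (q j - p j)) = 0
  · have h0 : max 0 (q k - p k) ≤ ∑ j, max 0 (q j - p j) :=
      Finset.single_le_sum (f := fun j => max 0 (q j - p j))
        (fun j _ => le_max_left _ _) (Finset.mem_univ k)
    rw [hT] at h0
    have hck : max 0 (q k - p k) = 0 := le_antisymm h0 (le_max_left _ _)
    simp [Dd, hck]
  · have hstep : ∀ i, p i * Dd p q r (i, k)
        = max 0 (p i - q i) * max 0 (q k - p k) / (∑ j, max 0 (q j - p j)) := by
      intro i; unfold Dd; rw [← scal_ps p q r hp hq hr i]; ring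
    rw [Finset.sum_congr rfl fun i _ => hstep i, ← Finset.sum_div, ← Finset.sum_mul,
      ← scal_TT p q hp1 hq1, mul_comm, mul_div_assoc, div_self hT, mul_one]

lemma Dd_diag (hp : ∀ i, 0 ≤ p i) (hq : ∀ i, 0 ≤ q i)
    (hr : ∀ i, r i = if p i = 0 then 1 else min 1 (q i / p i)) :
    ∀ i, Dd p q r (i, i) = 0 := by
  intro i
  unfold Dd
  rw [show ((1:ℝ) - r (i, i).1) * max 0 (q (i,i).2 - p (i,i).2) = 0 from scal_sc p q r hp hq hr i]
  exact zero_div _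

lemma trB_J0 (hr0 : ∀ i, 0 ≤ r i)
    (hrow : ∀ i, ∑ k, Dd p q r (i, k) = 1 - r i) :
    trB (ptA (Gmat p q r)) = 1 := by
  ext i j
  show (∑ k, Gmat p q r (j, k) (i, k)) = (1 : Matrix A A ℂ) i j
  rw [Finset.sum_congr rfl fun k _ => Gmat_apply p q r (j, k) (i, k), Finset.sum_add_distrib]
  by_cases hij : i = j
  · subst hij
    simp only [Prod.mk.injEq, and_true, mul_ite, ite_mul, zero_mul, mul_zero]
    simp only [if_true]
    rw [show (∑ x, if i = x then if i = x then (Real.sqrt (r i):ℂ) * (Real.sqrt (r i):ℂ)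
          else 0 else 0)
        = ∑ x, if i = x then ((Real.sqrt (r i) * Real.sqrt (r i) : ℝ) : ℂ) else 0 from
      Finset.sum_congr rfl fun x _ => by split_ifs <;> push_cast <;> ring]
    rw [Finset.sum_ite_eq, Real.mul_self_sqrt (hr0 i)]
    rw [show (∑ x, ((Dd p q r (i, x) : ℝ) : ℂ)) = ((∑ x, Dd p q r (i, x) : ℝ) : ℂ) by
      push_cast; ring]
    rw [hrow i, Matrix.one_apply_eq]
    push_cast
    ring_nf
    simp
  · rw [Matrix.one_apply_ne (Ne.symm (Ne.symm hij))]
    rw [show (∑ x, ((if (j, x).1 = (j, x).2 then (Real.sqrt (r (j, x).1):ℂ) else 0)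
          * if (i, x).1 = (i, x).2 then (Real.sqrt (r (i, x).1):ℂ) else 0)) = 0 from
      Finset.sum_eq_zero fun x _ => by
        simp only []
        split_ifs with h1 h2 <;> simp_all]
    rw [show (∑ x, if (j, x) = (i, x) then ((Dd p q r (j, x) : ℝ) : ℂ) else 0) = 0 from
      Finset.sum_eq_zero fun x _ => by
        rw [if_neg]
        simp [Prod.ext_iff]
        exact fun h => absurd h.symm hij]
    ring

lemma minmax (k : A) : min (p k) (q k) + max 0 (q k - p k) = q k := by
  rcases le_total (p k) (q k) with h | h
  · rw [min_eq_left h, max_eq_right (by linarith)]; ring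
  · rw [min_eq_right h, max_eq_left (by linarith)]; ring

lemma trA_J0 (hp : ∀ i, 0 ≤ p i) (hq : ∀ i, 0 ≤ q i)
    (hp1 : ∑ i, p i = 1) (hq1 : ∑ i, q i = 1)
    (hr : ∀ i, r i = if p i = 0 then 1 else min 1 (q i / p i)) :
    trA ((Matrix.diagonal fun x : A × A => (p x.1 : ℂ)) * ptA (Gmat p q r))
      = Matrix.diagonal (fun i => (q i : ℂ)) := by
  have hr0 := scal_r0 p q r hp hq hr
  ext k l
  show (∑ i, ((Matrix.diagonal fun x : A × A => (p x.1 : ℂ)) * ptA (Gmat p q r)) (i, k) (i, l))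
    = Matrix.diagonal (fun i => (q i : ℂ)) k l
  simp only [Matrix.diagonal_mul, ptA, Matrix.of_apply]
  rw [Finset.sum_congr rfl fun i _ => congrArg (HMul.hMul ((p i : ℂ)))
    (Gmat_apply p q r (i, k) (i, l))]
  by_cases hkl : k = l
  · subst hkl
    rw [Matrix.diagonal_apply_eq]
    rw [Finset.sum_congr rfl fun i _ => show
      (p i : ℂ) * ((if (i, k).1 = (i, k).2 then (Real.sqrt (r (i, k).1) : ℂ) else 0)
          * (if (i, k).1 = (i, k).2 then (Real.sqrt (r (i, k).1) : ℂ) else 0)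
        + (if (i, k) = (i, k) then ((Dd p q r (i, k) : ℝ) : ℂ) else 0))
      = (if i = k then ((p i * (Real.sqrt (r i) * Real.sqrt (r i)) : ℝ) : ℂ) else 0)
        + ((p i * Dd p q r (i, k) : ℝ) : ℂ) from by
      rw [if_pos (rfl : (i, k) = (i, k))]
      simp only []
      split_ifs <;> push_cast <;> ring]
    rw [Finset.sum_add_distrib, Finset.sum_ite_eq']
    rw [show (∑ i, ((p i * Dd p q r (i, k) : ℝ) : ℂ)) = ((∑ i, p i * Dd p q r (i, k) : ℝ) : ℂ) by
      push_cast; ring]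
    rw [Dd_col p q r hp hq hp1 hq1 hr k]
    simp only [Finset.mem_univ, if_true]
    rw [show (p k * (Real.sqrt (r k) * Real.sqrt (r k)) : ℝ) = min (p k) (q k) by
      rw [Real.mul_self_sqrt (hr0 k), scal_pr p q r hp hq hr k]]
    rw [show ((min (p k) (q k) : ℝ) : ℂ) + ((max 0 (q k - p k) : ℝ) : ℂ)
        = ((min (p k) (q k) + max 0 (q k - p k) : ℝ) : ℂ) by push_cast; ring]
    rw [minmax p q k]
  · rw [Matrix.diagonal_apply_ne _ hkl]
    refine Finset.sum_eq_zero fun i _ => ?_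
    rw [show ((if (i, k).1 = (i, k).2 then (Real.sqrt (r (i, k).1) : ℂ) else 0)
          * (if (i, l).1 = (i, l).2 then (Real.sqrt (r (i, l).1) : ℂ) else 0)
        + (if (i, k) = (i, l) then ((Dd p q r (i, k) : ℝ) : ℂ) else 0)) = 0 from by
      rw [if_neg (show ¬((i, k) = (i, l)) from by
        simp only [Prod.mk.injEq, true_and]
        exact fun h => absurd h hkl)]
      simp only []
      split_ifs with h1 h2 <;> simp_all]
    ring

lemma F_J0 (hp : ∀ i, 0 ≤ p i) (hq : ∀ i, 0 ≤ q i)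
    (hr : ∀ i, r i = if p i = 0 then 1 else min 1 (q i / p i)) :
    ∀ i k : A, ((ptA (Gmat p q r)) (k, i) (i, k)).re = Real.sqrt (r i) * Real.sqrt (r k) := by
  intro i k
  rw [show (ptA (Gmat p q r)) (k, i) (i, k) = Gmat p q r (i, i) (k, k) from rfl,
    Gmat_apply]
  simp [Dd_diag p q r hp hq hr]

lemma F_le (hp : ∀ i, 0 ≤ p i) (hq : ∀ i, 0 ≤ q i)
    (hr : ∀ i, r i = if p i = 0 then 1 else min 1 (q i / p i))
    (J : Matrix (A × A) (A × A) ℂ) (hPSD : (ptA J).PosSemidef) (htrB : trB J = 1)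
    (hcon : trA ((Matrix.diagonal fun x : A × A => (p x.1 : ℂ)) * J)
      = Matrix.diagonal (fun i => (q i : ℂ))) :
    ∑ i, ∑ k, p i * (J (k, i) (i, k)).re
      ≤ ∑ i, ∑ k, p i * (Real.sqrt (r i) * Real.sqrt (r k)) := by
  have hdiag_nn : ∀ x : A × A, 0 ≤ (J x x).re := fun x => psd_diag_re_nonneg hPSD x
  have h1 : ∀ i, (J (i, i) (i, i)).re ≤ 1 := by
    intro i
    have he : (∑ k, J (i, k) (i, k)) = 1 := by
      have := congrArg (fun M : Matrix A A ℂ => M i i) htrB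
      simpa [trB, Matrix.one_apply] using this
    have hsum : ∑ k, (J (i, k) (i, k)).re = 1 := by
      rw [← Complex.re_sum, he, Complex.one_re]
    rw [← hsum]
    exact Finset.single_le_sum (fun k _ => hdiag_nn (i, k)) (Finset.mem_univ i)
  have h2 : ∀ i, p i * (J (i, i) (i, i)).re ≤ q i := by
    intro i
    have he : (∑ j, (p j : ℂ) * J (j, i) (j, i)) = (q i : ℂ) := by
      have := congrArg (fun M : Matrix A A ℂ => M i i) hcon
      simp only [trA, Matrix.of_apply, Matrix.diagonal_apply_eq] at this
      rw [← this]
      exact Finset.sum_congr rfl fun j _ => by rw [Matrix.diagonal_mul]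
    have hsum : ∑ j, p j * (J (j, i) (j, i)).re = q i := by
      have := congrArg Complex.re he
      simpa [Complex.re_sum, Complex.mul_re] using this
    rw [← hsum]
    exact Finset.single_le_sum (fun j _ => mul_nonneg (hp j) (hdiag_nn (j, i)))
      (Finset.mem_univ i)
  have hg : ∀ i, (J (i, i) (i, i)).re ≤ r i := by
    intro i
    rw [hr i]
    split_ifs with h
    · exact h1 i
    · have hpi : 0 < p i := lt_of_le_of_ne (hp i) (Ne.symm h)
      refine le_min (h1 i) ((le_div_iff₀ hpi).mpr ?_)
      have := h2 i
      linarith [h2 i, mul_comm (p i) ((J (i, i) (i, i)).re)]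
  have hE : ∀ i k : A, (J (k, i) (i, k)).re ≤ Real.sqrt (r i) * Real.sqrt (r k) := by
    intro i k
    have hple : (J (k, i) (i, k)).re
        ≤ Real.sqrt ((J (i, i) (i, i)).re) * Real.sqrt ((J (k, k) (k, k)).re) :=
      psd_entry_re_le hPSD (i, i) (k, k)
    refine le_trans hple (mul_le_mul (Real.sqrt_le_sqrt (hg i)) (Real.sqrt_le_sqrt (hg k))
      (Real.sqrt_nonneg _) (Real.sqrt_nonneg _))
  exact Finset.sum_le_sum fun i _ => Finset.sum_le_sum fun k _ =>
    mul_le_mul_of_nonneg_left (hE i k) (hp i)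

end Aux

theorem stmt19 {A : Type*} [Fintype A] [Nonempty A] [DecidableEq A]
    (p q : A → ℝ) (hp : ∀ i, 0 ≤ p i) (hp1 : ∑ i, p i = 1)
    (hq : ∀ i, 0 ≤ q i) (hq1 : ∑ i, q i = 1)
    (r : A → ℝ) (hr : ∀ i, r i = if p i = 0 then 1 else min 1 (q i / p i)) :
    cost (1 - ((1 : ℂ) / (Fintype.card A : ℂ)) • swap A)
        (Matrix.diagonal fun i => (p i : ℂ)) (Matrix.diagonal fun i => (q i : ℂ)) =
      (1 / (Fintype.card A : ℝ)) *
        ((Fintype.card A : ℝ) - ∑ i, ∑ j, p i * Real.sqrt (r i) * Real.sqrt (r j)) := by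
  classical
  have hr0 := scal_r0 p q r hp hq hr
  have hr1 := scal_r1 p q r hr
  have hd : (0 : ℝ) < (Fintype.card A : ℝ) := by exact_mod_cast Fintype.card_pos
  have hassoc : ∑ i, ∑ j, p i * Real.sqrt (r i) * Real.sqrt (r j)
      = ∑ i, ∑ j, p i * (Real.sqrt (r i) * Real.sqrt (r j)) :=
    Finset.sum_congr rfl fun i _ => Finset.sum_congr rfl fun j _ => mul_assoc _ _ _
  have hV' : (1 / (Fintype.card A : ℝ)) *
        ((Fintype.card A : ℝ) - ∑ i, ∑ j, p i * Real.sqrt (r i) * Real.sqrt (r j))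
      = 1 - (1 / (Fintype.card A : ℝ))
          * ∑ i, ∑ j, p i * (Real.sqrt (r i) * Real.sqrt (r j)) := by
    rw [hassoc]
    field_simp
  rw [cost]
  simp only [kron_diag_one p]
  set V : ℝ := (1 / (Fintype.card A : ℝ)) *
      ((Fintype.card A : ℝ) - ∑ i, ∑ j, p i * Real.sqrt (r i) * Real.sqrt (r j)) with hV
  have hmem : V ∈ {x : ℝ | ∃ J : Matrix (A × A) (A × A) ℂ, IsJam J ∧
      trA ((Matrix.diagonal fun y : A × A => (p y.1 : ℂ)) * J)
        = Matrix.diagonal (fun i => (q i : ℂ)) ∧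
      x = (Matrix.trace ((1 - ((1 : ℂ) / (Fintype.card A : ℂ)) • swap A)
        * jordan (Matrix.diagonal fun y : A × A => (p y.1 : ℂ)) J)).re} := by
    refine ⟨ptA (Gmat p q r),
      ⟨Gmat_psd p q r hr1, trB_J0 p q r hr0 (Dd_row p q r hp hq hp1 hq1 hr)⟩,
      trA_J0 p q r hp hq hp1 hq1 hr, ?_⟩
    rw [key_formula p q hq1 (ptA (Gmat p q r)) (Gmat_psd p q r hr1).isHermitian
      (trA_J0 p q r hp hq hp1 hq1 hr)]
    rw [show (∑ i, ∑ k, p i * ((ptA (Gmat p q r)) (k, i) (i, k)).re)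
        = ∑ i, ∑ k, p i * (Real.sqrt (r i) * Real.sqrt (r k)) from
      Finset.sum_congr rfl fun i _ => Finset.sum_congr rfl fun k _ => by
        rw [F_J0 p q r hp hq hr i k]]
    exact hV'
  have hlb : ∀ x ∈ {x : ℝ | ∃ J : Matrix (A × A) (A × A) ℂ, IsJam J ∧
      trA ((Matrix.diagonal fun y : A × A => (p y.1 : ℂ)) * J)
        = Matrix.diagonal (fun i => (q i : ℂ)) ∧
      x = (Matrix.trace ((1 - ((1 : ℂ) / (Fintype.card A : ℂ)) • swap A)
        * jordan (Matrix.diagonal fun y : A × A => (p y.1 : ℂ)) J)).re}, V ≤ x := by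
    rintro x ⟨J, ⟨hPSD, htrB⟩, hcon, rfl⟩
    rw [key_formula p q hq1 J hPSD.isHermitian hcon]
    have hle := F_le p q r hp hq hr J hPSD htrB hcon
    have hpos : (0 : ℝ) ≤ 1 / (Fintype.card A : ℝ) := by positivity
    exact le_trans (le_of_eq hV')
      (sub_le_sub_left (mul_le_mul_of_nonneg_left hle hpos) 1)
  exact le_antisymm (csInf_le ⟨V, hlb⟩ hmem) (le_csInf ⟨V, hmem⟩ hlb)
end
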